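/- With T* as above, for all μ and μ' with ‖μ - μ'‖_∞ ≤ √(σ²/(2 T*(μ))), one has T*(μ') ≤ 4 T*(μ), and consequently |ln T*(μ') - ln T*(μ)| ≤ √(8 T*(μ)/σ²)·‖μ - μ'‖_∞. -/

import Mathlib

/-- `Tinv K σ2 Alt μ = (T*(μ))⁻¹ = sup_{w ∈ Δ_K} inf_{λ ∈ Alt μ} Σ_i w_i (μ_i - λ_i)²/(2σ²)`. -/
noncomputable def Tinv (K : ℕ) (σ2 : ℝ) (Alt : (Fin K → ℝ) → Set (Fin K → ℝ))
    (μ : Fin K → ℝ) : ℝ :=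
  sSup {x | ∃ w ∈ stdSimplex ℝ (Fin K), x =
    sInf {y | ∃ l ∈ Alt μ, y = ∑ i, w i * (μ i - l i) ^ 2 / (2 * σ2)}}

lemma minkowski_sum (K : ℕ) (u v : Fin K → ℝ) :
    Real.sqrt (∑ i, (u i + v i)^2) ≤ Real.sqrt (∑ i, u i ^ 2) + Real.sqrt (∑ i, v i ^ 2) := by
  have h := norm_add_le (E := EuclideanSpace ℝ (Fin K)) (WithLp.toLp 2 u) (WithLp.toLp 2 v)
  simp only [EuclideanSpace.norm_eq, Real.norm_eq_abs, sq_abs] at h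
  simpa [PiLp.add_apply, PiLp.toLp_apply] using h


section aux
variable (K : ℕ) (σ2 : ℝ) (Alt : (Fin K → ℝ) → Set (Fin K → ℝ))

-- the objective
noncomputable def Fob (ν w l : Fin K → ℝ) : ℝ := ∑ i, w i * (ν i - l i) ^ 2 / (2 * σ2)

-- the inner inf
noncomputable def gf (ν w : Fin K → ℝ) : ℝ :=
  sInf {y | ∃ l ∈ Alt ν, y = Fob K σ2 ν w l}

lemma Tinv_eq (ν : Fin K → ℝ) :
    Tinv K σ2 Alt ν = sSup {x | ∃ w ∈ stdSimplex ℝ (Fin K), x = gf K σ2 Alt ν w} := rfl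

variable {K σ2 Alt}
variable (hσ2 : 0 < σ2)
include hσ2

lemma Fob_nonneg {w : Fin K → ℝ} (hw : w ∈ stdSimplex ℝ (Fin K)) (ν l : Fin K → ℝ) :
    0 ≤ Fob K σ2 ν w l := by
  apply Finset.sum_nonneg
  intro i _
  have := hw.1 i
  positivity

lemma gf_le {w : Fin K → ℝ} (hw : w ∈ stdSimplex ℝ (Fin K)) {ν l : Fin K → ℝ}
    (hl : l ∈ Alt ν) : gf K σ2 Alt ν w ≤ Fob K σ2 ν w l := by
  refine csInf_le ⟨0, ?_⟩ ⟨l, hl, rfl⟩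
  rintro y ⟨l', _, rfl⟩
  exact Fob_nonneg hσ2 hw ν l'

lemma gf_nonneg {w : Fin K → ℝ} (hw : w ∈ stdSimplex ℝ (Fin K)) {ν : Fin K → ℝ}
    (hne : (Alt ν).Nonempty) : 0 ≤ gf K σ2 Alt ν w := by
  apply le_csInf
  · obtain ⟨l, hl⟩ := hne; exact ⟨_, l, hl, rfl⟩
  · rintro y ⟨l', _, rfl⟩
    exact Fob_nonneg hσ2 hw ν l'

lemma Tinv_nonneg {ν : Fin K → ℝ} (hne : (Alt ν).Nonempty) :
    0 ≤ Tinv K σ2 Alt ν := by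
  rw [Tinv_eq]
  apply Real.sSup_nonneg
  rintro x ⟨w, hw, rfl⟩
  exact gf_nonneg hσ2 hw hne

lemma bddAbove_Tset {ν : Fin K → ℝ} (hne : (Alt ν).Nonempty) :
    BddAbove {x | ∃ w ∈ stdSimplex ℝ (Fin K), x = gf K σ2 Alt ν w} := by
  obtain ⟨l₀, hl₀⟩ := hne
  refine ⟨∑ i, (ν i - l₀ i) ^ 2 / (2 * σ2), ?_⟩
  rintro x ⟨w, hw, rfl⟩
  refine (gf_le hσ2 hw hl₀).trans (Finset.sum_le_sum fun i _ => ?_)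
  rw [div_le_div_iff_of_pos_right (by linarith)]
  exact mul_le_of_le_one_left (by positivity)
    (hw.2 ▸ Finset.single_le_sum (fun j _ => hw.1 j) (Finset.mem_univ i))

lemma gf_le_Tinv {w : Fin K → ℝ} (hw : w ∈ stdSimplex ℝ (Fin K)) {ν : Fin K → ℝ}
    (hne : (Alt ν).Nonempty) : gf K σ2 Alt ν w ≤ Tinv K σ2 Alt ν := by
  rw [Tinv_eq]
  exact le_csSup (bddAbove_Tset hσ2 hne) ⟨w, hw, rfl⟩

-- pointwise triangle inequality
lemma Fob_tri {w : Fin K → ℝ} (hw : w ∈ stdSimplex ℝ (Fin K)) (μ μ' l : Fin K → ℝ) :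
    Real.sqrt (Fob K σ2 μ w l) ≤ Real.sqrt (Fob K σ2 μ' w l) + ‖μ - μ'‖ / Real.sqrt (2 * σ2) := by
  have hc : (0:ℝ) < 2 * σ2 := by linarith
  have hsum : ∀ ν : Fin K → ℝ, Fob K σ2 ν w l = (∑ i, w i * (ν i - l i) ^ 2) / (2 * σ2) := by
    intro ν; rw [Fob, Finset.sum_div]
  have hA : (0:ℝ) ≤ ∑ i, w i * (μ i - l i) ^ 2 :=
    Finset.sum_nonneg fun i _ => by have := hw.1 i; positivity
  have hA' : (0:ℝ) ≤ ∑ i, w i * (μ' i - l i) ^ 2 :=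
    Finset.sum_nonneg fun i _ => by have := hw.1 i; positivity
  rw [hsum, hsum, Real.sqrt_div hA, Real.sqrt_div hA', ← add_div]
  apply div_le_div_of_nonneg_right ?_ (Real.sqrt_pos.mpr hc).le
  -- √A ≤ √A' + ‖μ - μ'‖
  have hmink := minkowski_sum K (fun i => Real.sqrt (w i) * (μ i - μ' i))
    (fun i => Real.sqrt (w i) * (μ' i - l i))
  have e1 : ∀ (a b : Fin K → ℝ), ∀ i, (Real.sqrt (w i) * (a i - b i)) ^ 2
      = w i * (a i - b i) ^ 2 := by
    intro a b i
    rw [mul_pow, Real.sq_sqrt (hw.1 i)]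
  have e2 : (∑ i, (Real.sqrt (w i) * (μ i - μ' i) + Real.sqrt (w i) * (μ' i - l i)) ^ 2)
      = ∑ i, w i * (μ i - l i) ^ 2 := by
    refine Finset.sum_congr rfl fun i _ => ?_
    rw [← mul_add]
    have : μ i - μ' i + (μ' i - l i) = μ i - l i := by ring
    rw [this, mul_pow, Real.sq_sqrt (hw.1 i)]
  simp only [e1, e2] at hmink
  refine hmink.trans ?_
  rw [add_comm]
  refine (add_le_add_iff_left _).mpr ?_
  have hD : (∑ i, w i * (μ i - μ' i) ^ 2) ≤ ‖μ - μ'‖ ^ 2 := by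
    calc (∑ i, w i * (μ i - μ' i) ^ 2) ≤ ∑ i, w i * ‖μ - μ'‖ ^ 2 := by
          refine Finset.sum_le_sum fun i _ => ?_
          refine mul_le_mul_of_nonneg_left ?_ (hw.1 i)
          have h := norm_le_pi_norm (μ - μ') i
          rw [Pi.sub_apply, Real.norm_eq_abs] at h
          calc (μ i - μ' i) ^ 2 = |μ i - μ' i| ^ 2 := (sq_abs _).symm
            _ ≤ ‖μ - μ'‖ ^ 2 := pow_le_pow_left₀ (abs_nonneg _) h 2
      _ = ‖μ - μ'‖ ^ 2 := by rw [← Finset.sum_mul, hw.2, one_mul]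
  calc Real.sqrt (∑ i, w i * (μ i - μ' i) ^ 2) ≤ Real.sqrt (‖μ - μ'‖ ^ 2) :=
        Real.sqrt_le_sqrt hD
    _ = ‖μ - μ'‖ := Real.sqrt_sq (norm_nonneg _)

end aux

lemma key (K : ℕ) (σ2 : ℝ) (hσ2 : 0 < σ2)
    (Alt : (Fin K → ℝ) → Set (Fin K → ℝ))
    (μ μ' : Fin K → ℝ) (h1 : (Alt μ).Nonempty) (h2 : (Alt μ').Nonempty)
    (hAlt : Alt μ = Alt μ' ∨ μ' ∈ Alt μ) :
    Real.sqrt (Tinv K σ2 Alt μ) ≤ Real.sqrt (Tinv K σ2 Alt μ') + ‖μ - μ'‖ / Real.sqrt (2 * σ2) := by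
  set d := ‖μ - μ'‖ / Real.sqrt (2 * σ2) with hd
  have hc : (0:ℝ) < 2 * σ2 := by linarith
  have hd0 : 0 ≤ d := div_nonneg (norm_nonneg _) (Real.sqrt_nonneg _)
  have hT'0 : 0 ≤ Tinv K σ2 Alt μ' := Tinv_nonneg hσ2 h2
  set T' := Tinv K σ2 Alt μ' with hT'
  have hB0 : 0 ≤ Real.sqrt T' + d := by positivity
  have hmain : Tinv K σ2 Alt μ ≤ (Real.sqrt T' + d) ^ 2 := by
    rw [Tinv_eq]
    apply Real.sSup_le _ (by positivity)
    rintro x ⟨w, hw, rfl⟩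
    have hgT' : gf K σ2 Alt μ' w ≤ T' := gf_le_Tinv hσ2 hw h2
    have hg'0 : 0 ≤ gf K σ2 Alt μ' w := gf_nonneg hσ2 hw h2
    rcases hAlt with heq | hmem
    · -- Alt μ = Alt μ'
      have hkey : ∀ ε : ℝ, 0 < ε →
          gf K σ2 Alt μ w ≤ (Real.sqrt (gf K σ2 Alt μ' w + ε) + d) ^ 2 := by
        intro ε hε
        have hne' : {y | ∃ l ∈ Alt μ', y = Fob K σ2 μ' w l}.Nonempty := by
          obtain ⟨l, hl⟩ := h2; exact ⟨_, l, hl, rfl⟩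
        obtain ⟨y, ⟨l, hl, rfl⟩, hy⟩ := Real.lt_sInf_add_pos hne' hε
        have hlμ : l ∈ Alt μ := heq ▸ hl
        have hF0 : 0 ≤ Fob K σ2 μ w l := Fob_nonneg hσ2 hw μ l
        calc gf K σ2 Alt μ w ≤ Fob K σ2 μ w l := gf_le hσ2 hw hlμ
          _ = Real.sqrt (Fob K σ2 μ w l) ^ 2 := (Real.sq_sqrt hF0).symm
          _ ≤ (Real.sqrt (Fob K σ2 μ' w l) + d) ^ 2 :=
              pow_le_pow_left₀ (Real.sqrt_nonneg _) (Fob_tri hσ2 hw μ μ' l) 2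
          _ ≤ (Real.sqrt (gf K σ2 Alt μ' w + ε) + d) ^ 2 := by
              have : Real.sqrt (Fob K σ2 μ' w l) ≤ Real.sqrt (gf K σ2 Alt μ' w + ε) :=
                Real.sqrt_le_sqrt hy.le
              exact pow_le_pow_left₀ (by positivity) (by linarith) 2
      have htend : Filter.Tendsto (fun ε : ℝ => (Real.sqrt (gf K σ2 Alt μ' w + ε) + d) ^ 2)
          (nhdsWithin 0 (Set.Ioi 0)) (nhds ((Real.sqrt (gf K σ2 Alt μ' w) + d) ^ 2)) := by
        have hcont : Continuous fun ε : ℝ => (Real.sqrt (gf K σ2 Alt μ' w + ε) + d) ^ 2 := by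
          fun_prop
        have h0 := hcont.tendsto 0
        simp only [add_zero] at h0
        exact h0.mono_left nhdsWithin_le_nhds
      have hle : gf K σ2 Alt μ w ≤ (Real.sqrt (gf K σ2 Alt μ' w) + d) ^ 2 :=
        ge_of_tendsto htend (eventually_nhdsWithin_of_forall fun ε hε => hkey ε hε)
      refine hle.trans ?_
      refine pow_le_pow_left₀ (by positivity) ?_ 2
      have := Real.sqrt_le_sqrt hgT'
      linarith
    · -- μ' ∈ Alt μ
      have ha : gf K σ2 Alt μ w ≤ Fob K σ2 μ w μ' := gf_le hσ2 hw hmem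
      have hb : Fob K σ2 μ w μ' ≤ d ^ 2 := by
        have hd2 : d ^ 2 = ‖μ - μ'‖ ^ 2 / (2 * σ2) := by
          rw [hd, div_pow, Real.sq_sqrt hc.le]
        rw [hd2]
        calc Fob K σ2 μ w μ' ≤ ∑ i, w i * ‖μ - μ'‖ ^ 2 / (2 * σ2) := by
              refine Finset.sum_le_sum fun i _ => ?_
              rw [div_le_div_iff_of_pos_right hc]
              refine mul_le_mul_of_nonneg_left ?_ (hw.1 i)
              have h := norm_le_pi_norm (μ - μ') i
              rw [Pi.sub_apply, Real.norm_eq_abs] at h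
              calc (μ i - μ' i) ^ 2 = |μ i - μ' i| ^ 2 := (sq_abs _).symm
                _ ≤ ‖μ - μ'‖ ^ 2 := pow_le_pow_left₀ (abs_nonneg _) h 2
          _ = ‖μ - μ'‖ ^ 2 / (2 * σ2) := by
              rw [← Finset.sum_div, ← Finset.sum_mul, hw.2, one_mul]
      refine (ha.trans hb).trans ?_
      refine pow_le_pow_left₀ hd0 ?_ 2
      have := Real.sqrt_nonneg T'
      linarith
  calc Real.sqrt (Tinv K σ2 Alt μ) ≤ Real.sqrt ((Real.sqrt T' + d) ^ 2) :=
        Real.sqrt_le_sqrt hmain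
    _ = Real.sqrt T' + d := Real.sqrt_sq hB0

/-- If `‖μ - μ'‖_∞ ≤ √(σ²/(2 T*(μ)))` then `T*(μ') ≤ 4 T*(μ)` and
`|ln T*(μ') - ln T*(μ)| ≤ √(8 T*(μ)/σ²) ‖μ - μ'‖_∞`. -/
theorem stmt_8 (K : ℕ) (σ2 : ℝ) (hσ2 : 0 < σ2)
    (Alt : (Fin K → ℝ) → Set (Fin K → ℝ))
    (hAlt : ∀ μ μ' : Fin K → ℝ, Alt μ = Alt μ' ∨ μ' ∈ Alt μ)
    (μ μ' : Fin K → ℝ) (h1 : (Alt μ).Nonempty) (h2 : (Alt μ').Nonempty)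
    (hpos : 0 < Tinv K σ2 Alt μ) (hpos' : 0 < Tinv K σ2 Alt μ')
    (hdist : ‖μ - μ'‖ ≤ Real.sqrt (σ2 / (2 * (Tinv K σ2 Alt μ)⁻¹))) :
    (Tinv K σ2 Alt μ')⁻¹ ≤ 4 * (Tinv K σ2 Alt μ)⁻¹ ∧
      |Real.log (Tinv K σ2 Alt μ')⁻¹ - Real.log (Tinv K σ2 Alt μ)⁻¹| ≤
        Real.sqrt (8 * (Tinv K σ2 Alt μ)⁻¹ / σ2) * ‖μ - μ'‖ := by
  set a := Tinv K σ2 Alt μ with ha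
  set b := Tinv K σ2 Alt μ' with hb
  set n := ‖μ - μ'‖ with hn
  have hc : (0:ℝ) < 2 * σ2 := by linarith
  have hs0 : 0 < Real.sqrt (2 * σ2) := Real.sqrt_pos.mpr hc
  set s := Real.sqrt (2 * σ2) with hs
  set d := n / s with hd
  have hn0 : 0 ≤ n := norm_nonneg _
  have hd0 : 0 ≤ d := div_nonneg hn0 hs0.le
  set sa := Real.sqrt a with hsa
  set sb := Real.sqrt b with hsb
  have hsa0 : 0 < sa := Real.sqrt_pos.mpr hpos
  have hsb0 : 0 < sb := Real.sqrt_pos.mpr hpos'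
  have hsa2 : sa ^ 2 = a := Real.sq_sqrt hpos.le
  have hsb2 : sb ^ 2 = b := Real.sq_sqrt hpos'.le
  have key1 : sa ≤ sb + d := key K σ2 hσ2 Alt μ μ' h1 h2 (hAlt μ μ')
  have key2 : sb ≤ sa + d := by
    have := key K σ2 hσ2 Alt μ' μ h2 h1 (hAlt μ' μ)
    rwa [norm_sub_rev] at this
  -- d ≤ sa / 2
  have hdd : d ≤ sa / 2 := by
    have e0 : σ2 / (2 * a⁻¹) = σ2 * a / 2 := by
      field_simp
    rw [e0] at hdist
    have e1 : Real.sqrt (σ2 * a / 2) / s = Real.sqrt (a / 4) := by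
      rw [hs, ← Real.sqrt_div (by positivity)]
      congr 1
      field_simp
      ring
    have e2 : Real.sqrt (a / 4) = sa / 2 := by
      rw [Real.sqrt_div hpos.le, show (4:ℝ) = 2 ^ 2 by norm_num,
        Real.sqrt_sq (by norm_num)]
    calc d = n / s := hd
      _ ≤ Real.sqrt (σ2 * a / 2) / s := by gcongr
      _ = sa / 2 := by rw [e1, e2]
  have hhalf : sa / 2 ≤ sb := by linarith
  constructor
  · -- b⁻¹ ≤ 4 a⁻¹
    have h4 : a / 4 ≤ b := by nlinarith
    have hinv : b⁻¹ ≤ (a / 4)⁻¹ := by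
      apply inv_anti₀ (by positivity) h4
    calc b⁻¹ ≤ (a / 4)⁻¹ := hinv
      _ = 4 * a⁻¹ := by rw [inv_div]; ring
  · -- log part
    have la : Real.log a = 2 * Real.log sa := by
      rw [hsa, Real.log_sqrt hpos.le]; ring
    have lb : Real.log b = 2 * Real.log sb := by
      rw [hsb, Real.log_sqrt hpos'.le]; ring
    have hub : Real.log sa - Real.log sb ≤ 2 * d / sa := by
      calc Real.log sa - Real.log sb = Real.log (sa / sb) :=
            (Real.log_div hsa0.ne' hsb0.ne').symm
        _ ≤ sa / sb - 1 := Real.log_le_sub_one_of_pos (by positivity)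
        _ = (sa - sb) / sb := by rw [sub_div, div_self hsb0.ne']
        _ ≤ d / sb := div_le_div_of_nonneg_right (by linarith) hsb0.le
        _ ≤ 2 * d / sa := by
            rw [div_le_div_iff₀ hsb0 hsa0]
            nlinarith
    have hlb : Real.log sb - Real.log sa ≤ 2 * d / sa := by
      calc Real.log sb - Real.log sa = Real.log (sb / sa) :=
            (Real.log_div hsb0.ne' hsa0.ne').symm
        _ ≤ sb / sa - 1 := Real.log_le_sub_one_of_pos (by positivity)
        _ = (sb - sa) / sa := by rw [sub_div, div_self hsa0.ne']
        _ ≤ 2 * d / sa := div_le_div_of_nonneg_right (by linarith) hsa0.le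
    have habs : |Real.log a - Real.log b| ≤ 4 * d / sa := by
      have heq : 2 * (2 * d / sa) = 4 * d / sa := by ring
      rw [la, lb, abs_le]
      constructor
      · linarith
      · linarith
    have hr : Real.sqrt (8 * a⁻¹ / σ2) = 4 / (s * sa) := by
      have hsq : (4 / (s * sa)) ^ 2 = 8 * a⁻¹ / σ2 := by
        rw [div_pow, mul_pow, hs, Real.sq_sqrt hc.le, hsa2]
        field_simp
        ring
      rw [← hsq, Real.sqrt_sq (by positivity)]
    have hre : Real.sqrt (8 * a⁻¹ / σ2) * n = 4 * d / sa := by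
      rw [hr, hd]
      field_simp
    rw [Real.log_inv, Real.log_inv,
      show -Real.log b - -Real.log a = Real.log a - Real.log b from by ring, hre]
    exact habs
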